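/- Let h be convex L-Lipschitz, t > 0, and define for the composite problem the two prox-linear steps x⁺ = argmin_z { h(c(x)+∇c(x)(z−x)) + g(z) + ‖z−x‖²/(2t) } and x̂ = argmin_z { h_ν(c(x)+∇c(x)(z−x)) + g(z) + ‖z−x‖²/(2t) }, where h_ν is the Moreau envelope. Then t⁻¹‖x⁺ − x‖ ≤ t⁻¹‖x̂ − x‖ + √(L²ν/(2t)). -/

import Mathlib

open scoped RealInnerProductSpace

/-- The Moreau envelope of `h` with parameter `ν`. -/
noncomputable def moreauEnv {F : Type*} [NormedAddCommGroup F]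
    (h : F → ℝ) (ν : ℝ) (w : F) : ℝ :=
  ⨅ u, h u + ‖u - w‖ ^ 2 / (2 * ν)

section Moreau

variable {F : Type*} [NormedAddCommGroup F] [NormedSpace ℝ F]
variable (h : F → ℝ) (L ν : ℝ)

lemma moreau_lb (hν : 0 < ν) (hhL : ∀ u v, |h u - h v| ≤ L * ‖u - v‖)
    (w u : F) : h w - L ^ 2 * ν / 2 ≤ h u + ‖u - w‖ ^ 2 / (2 * ν) := by
  have h1 : h w - h u ≤ L * ‖w - u‖ := (abs_le.mp (hhL w u)).2
  have h2 : ‖w - u‖ = ‖u - w‖ := norm_sub_rev _ _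
  have key : L * ‖u - w‖ - L ^ 2 * ν / 2 ≤ ‖u - w‖ ^ 2 / (2 * ν) := by
    rw [le_div_iff₀ (by linarith : (0:ℝ) < 2 * ν)]
    nlinarith [sq_nonneg (‖u - w‖ - L * ν)]
  rw [h2] at h1
  linarith

lemma moreau_bdd (hν : 0 < ν) (hhL : ∀ u v, |h u - h v| ≤ L * ‖u - v‖)
    (w : F) : BddBelow (Set.range fun u => h u + ‖u - w‖ ^ 2 / (2 * ν)) :=
  ⟨h w - L ^ 2 * ν / 2, by rintro _ ⟨u, rfl⟩; exact moreau_lb h L ν hν hhL w u⟩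

lemma moreau_le (hν : 0 < ν) (hhL : ∀ u v, |h u - h v| ≤ L * ‖u - v‖)
    (w : F) : moreauEnv h ν w ≤ h w := by
  have := ciInf_le (moreau_bdd h L ν hν hhL w) w
  simpa [moreauEnv] using this

lemma le_moreau (hν : 0 < ν) (hhL : ∀ u v, |h u - h v| ≤ L * ‖u - v‖)
    (w : F) : h w - L ^ 2 * ν / 2 ≤ moreauEnv h ν w :=
  le_ciInf (moreau_lb h L ν hν hhL w)

lemma moreau_convexOn (hν : 0 < ν) (hh : ConvexOn ℝ Set.univ h)
    (hhL : ∀ u v, |h u - h v| ≤ L * ‖u - v‖) :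
    ConvexOn ℝ Set.univ (moreauEnv h ν) := by
  refine ⟨convex_univ, fun w1 _ w2 _ a b ha hb hab => ?_⟩
  have hb' : b = 1 - a := by linarith
  subst hb'
  refine le_of_forall_pos_le_add fun ε hε => ?_
  have e1 : moreauEnv h ν w1 < moreauEnv h ν w1 + ε := by linarith
  have e2 : moreauEnv h ν w2 < moreauEnv h ν w2 + ε := by linarith
  rw [moreauEnv] at e1 e2
  obtain ⟨u1, hu1⟩ := exists_lt_of_ciInf_lt e1
  obtain ⟨u2, hu2⟩ := exists_lt_of_ciInf_lt e2
  have step : moreauEnv h ν (a • w1 + (1 - a) • w2) ≤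
      h (a • u1 + (1 - a) • u2)
        + ‖(a • u1 + (1 - a) • u2) - (a • w1 + (1 - a) • w2)‖ ^ 2 / (2 * ν) := by
    rw [moreauEnv]
    exact ciInf_le (moreau_bdd h L ν hν hhL _) _
  have hcomb : (a • u1 + (1 - a) • u2) - (a • w1 + (1 - a) • w2)
      = a • (u1 - w1) + (1 - a) • (u2 - w2) := by module
  have hnorm1 : ‖a • (u1 - w1) + (1 - a) • (u2 - w2)‖
      ≤ a * ‖u1 - w1‖ + (1 - a) * ‖u2 - w2‖ := by
    calc ‖a • (u1 - w1) + (1 - a) • (u2 - w2)‖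
        ≤ ‖a • (u1 - w1)‖ + ‖(1 - a) • (u2 - w2)‖ := norm_add_le _ _
      _ = a * ‖u1 - w1‖ + (1 - a) * ‖u2 - w2‖ := by
          rw [norm_smul, norm_smul, Real.norm_eq_abs, Real.norm_eq_abs,
            abs_of_nonneg ha, abs_of_nonneg hb]
  have hnorm2 : ‖(a • u1 + (1 - a) • u2) - (a • w1 + (1 - a) • w2)‖ ^ 2
      ≤ a * ‖u1 - w1‖ ^ 2 + (1 - a) * ‖u2 - w2‖ ^ 2 := by
    rw [hcomb]
    have h0 : (0:ℝ) ≤ ‖a • (u1 - w1) + (1 - a) • (u2 - w2)‖ := norm_nonneg _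
    have hsq : ‖a • (u1 - w1) + (1 - a) • (u2 - w2)‖ ^ 2
        ≤ (a * ‖u1 - w1‖ + (1 - a) * ‖u2 - w2‖) ^ 2 := by
      apply pow_le_pow_left₀ h0 hnorm1
    nlinarith [hsq, sq_nonneg (‖u1 - w1‖ - ‖u2 - w2‖), mul_nonneg ha hb]
  have hhconv : h (a • u1 + (1 - a) • u2) ≤ a * h u1 + (1 - a) * h u2 :=
    hh.2 (Set.mem_univ u1) (Set.mem_univ u2) ha hb hab
  have hdiv : ‖(a • u1 + (1 - a) • u2) - (a • w1 + (1 - a) • w2)‖ ^ 2 / (2 * ν)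
      ≤ a * (‖u1 - w1‖ ^ 2 / (2 * ν)) + (1 - a) * (‖u2 - w2‖ ^ 2 / (2 * ν)) := by
    have e : a * (‖u1 - w1‖ ^ 2 / (2 * ν)) + (1 - a) * (‖u2 - w2‖ ^ 2 / (2 * ν))
        = (a * ‖u1 - w1‖ ^ 2 + (1 - a) * ‖u2 - w2‖ ^ 2) / (2 * ν) := by ring
    rw [e]
    exact div_le_div_of_nonneg_right hnorm2 (by linarith : (0:ℝ) ≤ 2 * ν)
  have hb1 : a * (h u1 + ‖u1 - w1‖ ^ 2 / (2 * ν)) ≤ a * (moreauEnv h ν w1 + ε) := by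
    apply mul_le_mul_of_nonneg_left _ ha
    rw [moreauEnv]; exact hu1.le
  have hb2 : (1 - a) * (h u2 + ‖u2 - w2‖ ^ 2 / (2 * ν))
      ≤ (1 - a) * (moreauEnv h ν w2 + ε) := by
    apply mul_le_mul_of_nonneg_left _ hb
    rw [moreauEnv]; exact hu2.le
  calc moreauEnv h ν (a • w1 + (1 - a) • w2)
      ≤ h (a • u1 + (1 - a) • u2)
        + ‖(a • u1 + (1 - a) • u2) - (a • w1 + (1 - a) • w2)‖ ^ 2 / (2 * ν) := step
    _ ≤ a * (h u1 + ‖u1 - w1‖ ^ 2 / (2 * ν))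
        + (1 - a) * (h u2 + ‖u2 - w2‖ ^ 2 / (2 * ν)) := by
          have := hdiv; nlinarith [hhconv, hdiv]
    _ ≤ a * (moreauEnv h ν w1 + ε) + (1 - a) * (moreauEnv h ν w2 + ε) := by
          linarith
    _ = a * moreauEnv h ν w1 + (1 - a) * moreauEnv h ν w2 + ε := by ring

end Moreau

/-- Quadratic growth away from the minimizer of a convex + quadratic function. -/
lemma growth_aux {E : Type*} [NormedAddCommGroup E] [InnerProductSpace ℝ E]
    (φ : E → ℝ) (hφ : ConvexOn ℝ Set.univ φ) (x p : E) (t : ℝ) (ht : 0 < t)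
    (hp : ∀ z, φ p + ‖p - x‖ ^ 2 / (2 * t) ≤ φ z + ‖z - x‖ ^ 2 / (2 * t)) (z : E) :
    φ p + ‖p - x‖ ^ 2 / (2 * t) + ‖z - p‖ ^ 2 / (2 * t) ≤ φ z + ‖z - x‖ ^ 2 / (2 * t) := by
  obtain ⟨C, hC⟩ : ∃ C : ℝ, C = ‖z - p‖ ^ 2 / (2 * t) := ⟨_, rfl⟩
  obtain ⟨D, hD⟩ : ∃ D : ℝ,
      D = (φ z + ‖z - x‖ ^ 2 / (2 * t)) - (φ p + ‖p - x‖ ^ 2 / (2 * t)) := ⟨_, rfl⟩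
  have hD0 : 0 ≤ D := by have := hp z; rw [hD]; linarith
  have hC0 : 0 ≤ C := by rw [hC]; positivity
  have key : ∀ l : ℝ, 0 < l → l < 1 → (1 - l) * C ≤ D := by
    intro l hl0 hl1
    have hl0' : (0:ℝ) ≤ 1 - l := by linarith
    set w : E := (1 - l) • p + l • z with hw
    have hφw : φ w ≤ (1 - l) * φ p + l * φ z :=
      hφ.2 (Set.mem_univ p) (Set.mem_univ z) hl0' hl0.le (by ring)
    have hwx : w - x = (1 - l) • (p - x) + l • (z - x) := by rw [hw]; module
    have hzp : z - p = (z - x) - (p - x) := by abel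
    set a : E := p - x with ha
    set b : E := z - x with hb
    have hnorm : ‖w - x‖ ^ 2 =
        (1 - l) * ‖a‖ ^ 2 + l * ‖b‖ ^ 2 - l * (1 - l) * ‖z - p‖ ^ 2 := by
      rw [hwx, hzp]
      have hba : ⟪b, a⟫ = ⟪a, b⟫ := real_inner_comm a b
      have e1 : ‖(1 - l) • a + l • b‖ ^ 2
          = (1 - l) ^ 2 * ‖a‖ ^ 2 + 2 * ((1 - l) * (l * ⟪a, b⟫)) + l ^ 2 * ‖b‖ ^ 2 := by
        simp only [← real_inner_self_eq_norm_sq, inner_add_left, inner_add_right,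
          real_inner_smul_left, real_inner_smul_right, hba]
        try ring
      have e2 : ‖b - a‖ ^ 2 = ‖b‖ ^ 2 - 2 * ⟪a, b⟫ + ‖a‖ ^ 2 := by
        simp only [← real_inner_self_eq_norm_sq, inner_sub_left, inner_sub_right, hba]
        try ring
      rw [e1, e2]; ring
    have hmin := hp w
    have hquad : ‖w - x‖ ^ 2 / (2 * t)
        = (1 - l) * (‖a‖ ^ 2 / (2 * t)) + l * (‖b‖ ^ 2 / (2 * t))
          - l * (1 - l) * (‖z - p‖ ^ 2 / (2 * t)) := by
      rw [hnorm]; field_simp; try ring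
    have hmain : φ p + ‖a‖ ^ 2 / (2 * t)
        ≤ (1 - l) * (φ p + ‖a‖ ^ 2 / (2 * t)) + l * (φ z + ‖b‖ ^ 2 / (2 * t))
          - l * (1 - l) * C := by
      calc φ p + ‖a‖ ^ 2 / (2 * t) ≤ φ w + ‖w - x‖ ^ 2 / (2 * t) := hmin
        _ ≤ ((1 - l) * φ p + l * φ z) + ‖w - x‖ ^ 2 / (2 * t) := by linarith
        _ = (1 - l) * (φ p + ‖a‖ ^ 2 / (2 * t)) + l * (φ z + ‖b‖ ^ 2 / (2 * t))
            - l * (1 - l) * C := by rw [hquad, hC]; ring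
    have hlD : l * ((1 - l) * C) ≤ l * D := by rw [hD]; nlinarith [hmain]
    exact le_of_mul_le_mul_left hlD hl0
  have hCD : C ≤ D := by
    by_contra hcon
    push_neg at hcon
    have hCpos : 0 < C := lt_of_le_of_lt hD0 hcon
    have hl0 : 0 < (C - D) / (2 * C) := div_pos (by linarith) (by linarith)
    have hl1 : (C - D) / (2 * C) < 1 := by
      rw [div_lt_one (by positivity)]; linarith
    have hkey := key _ hl0 hl1
    have heq : (1 - (C - D) / (2 * C)) * C = C - (C - D) / 2 := by
      field_simp
    rw [heq] at hkey
    linarith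
  rw [hC, hD] at hCD
  linarith

/-- Prox-gradient comparison under smoothing (Theorem 6.3): if `x⁺` is the prox-linear step for
the composite model with `h` and `x̂` is the prox-linear step for the model with the Moreau
envelope `h_ν` in place of `h`, then `t⁻¹ ‖x⁺ - x‖ ≤ t⁻¹ ‖x̂ - x‖ + √(L²ν/(2t))`. -/
theorem smoothing_prox_gradient_comparison {d m : ℕ}
    (g : EuclideanSpace ℝ (Fin d) → ℝ)
    (h : EuclideanSpace ℝ (Fin m) → ℝ)
    (c : EuclideanSpace ℝ (Fin d) → EuclideanSpace ℝ (Fin m))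
    (L t ν : ℝ) (hL : 0 ≤ L) (ht : 0 < t) (hν : 0 < ν)
    (hg : ConvexOn ℝ Set.univ g) (hgc : LowerSemicontinuous g)
    (hh : ConvexOn ℝ Set.univ h)
    (hhL : ∀ u v, |h u - h v| ≤ L * ‖u - v‖)
    (hc : ContDiff ℝ 1 c)
    (x xplus xhat : EuclideanSpace ℝ (Fin d))
    (hxplus : ∀ z,
      h (c x + fderiv ℝ c x (xplus - x)) + g xplus + ‖xplus - x‖ ^ 2 / (2 * t) ≤
        h (c x + fderiv ℝ c x (z - x)) + g z + ‖z - x‖ ^ 2 / (2 * t))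
    (hxhat : ∀ z,
      (⨅ u, h u + ‖u - (c x + fderiv ℝ c x (xhat - x))‖ ^ 2 / (2 * ν)) + g xhat +
          ‖xhat - x‖ ^ 2 / (2 * t) ≤
        (⨅ u, h u + ‖u - (c x + fderiv ℝ c x (z - x))‖ ^ 2 / (2 * ν)) + g z +
          ‖z - x‖ ^ 2 / (2 * t)) :
    t⁻¹ * ‖xplus - x‖ ≤ t⁻¹ * ‖xhat - x‖ + Real.sqrt (L ^ 2 * ν / (2 * t)) := by
  classical
  set A : EuclideanSpace ℝ (Fin d) → EuclideanSpace ℝ (Fin m) :=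
    fun z => c x + fderiv ℝ c x (z - x) with hAdef
  -- affine property of A
  have hAaff : ∀ (a b : ℝ) (z1 z2 : EuclideanSpace ℝ (Fin d)), a + b = 1 →
      A (a • z1 + b • z2) = a • A z1 + b • A z2 := by
    intro a b z1 z2 hab
    have hb' : b = 1 - a := by linarith
    subst hb'
    simp only [hAdef]
    have h1 : (a • z1 + (1 - a) • z2) - x = a • (z1 - x) + (1 - a) • (z2 - x) := by
      module
    rw [h1, map_add, map_smul, map_smul]
    module
  -- convexity of the two model functions
  have hφ1 : ConvexOn ℝ Set.univ (fun z => h (A z) + g z) := by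
    refine ConvexOn.add ⟨convex_univ, fun z1 _ z2 _ a b ha hb hab => ?_⟩ hg
    show h (A (a • z1 + b • z2)) ≤ a • h (A z1) + b • h (A z2)
    rw [hAaff a b z1 z2 hab]
    exact hh.2 (Set.mem_univ _) (Set.mem_univ _) ha hb hab
  have hnconv := moreau_convexOn h L ν hν hh hhL
  have hφ2 : ConvexOn ℝ Set.univ (fun z => moreauEnv h ν (A z) + g z) := by
    refine ConvexOn.add ⟨convex_univ, fun z1 _ z2 _ a b ha hb hab => ?_⟩ hg
    show moreauEnv h ν (A (a • z1 + b • z2)) ≤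
      a • moreauEnv h ν (A z1) + b • moreauEnv h ν (A z2)
    rw [hAaff a b z1 z2 hab]
    exact hnconv.2 (Set.mem_univ _) (Set.mem_univ _) ha hb hab
  -- growth inequalities
  have grow1 := growth_aux (fun z => h (A z) + g z) hφ1 x xplus t ht
    (by intro z; simp only [hAdef]; exact hxplus z) xhat
  have grow2 := growth_aux (fun z => moreauEnv h ν (A z) + g z) hφ2 x xhat t ht
    (by intro z; simp only [hAdef, moreauEnv]; exact hxhat z) xplus
  have hrev : ‖xhat - xplus‖ = ‖xplus - xhat‖ := norm_sub_rev _ _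
  have hsand1 : moreauEnv h ν (A xplus) ≤ h (A xplus) := moreau_le h L ν hν hhL _
  have hsand2 : h (A xhat) - L ^ 2 * ν / 2 ≤ moreauEnv h ν (A xhat) :=
    le_moreau h L ν hν hhL _
  have hd2 : ‖xplus - xhat‖ ^ 2 / t ≤ L ^ 2 * ν / 2 := by
    have e : ‖xplus - xhat‖ ^ 2 / (2 * t) + ‖xplus - xhat‖ ^ 2 / (2 * t)
        = ‖xplus - xhat‖ ^ 2 / t := by field_simp; ring
    rw [hrev] at grow1
    linarith [grow1, grow2]
  have hd2' : ‖xplus - xhat‖ ^ 2 ≤ t * (L ^ 2 * ν) / 2 := by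
    rw [div_le_iff₀ ht] at hd2
    nlinarith [hd2]
  -- final computation
  have htriangle : ‖xplus - x‖ ≤ ‖xplus - xhat‖ + ‖xhat - x‖ := by
    have e : xplus - x = (xplus - xhat) + (xhat - x) := by abel
    rw [e]; exact norm_add_le _ _
  have hstep : t⁻¹ * ‖xplus - xhat‖ ≤ Real.sqrt (L ^ 2 * ν / (2 * t)) := by
    rw [Real.le_sqrt (by positivity) (by positivity)]
    have hti : t * t⁻¹ = 1 := mul_inv_cancel₀ ht.ne'
    have hre : L ^ 2 * ν / (2 * t) = (t * (L ^ 2 * ν) / 2) * t⁻¹ * t⁻¹ := by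
      field_simp
    rw [hre, mul_pow]
    have hinv2 : (0:ℝ) ≤ t⁻¹ ^ 2 := sq_nonneg _
    have := mul_le_mul_of_nonneg_right hd2' hinv2
    calc t⁻¹ ^ 2 * ‖xplus - xhat‖ ^ 2 = ‖xplus - xhat‖ ^ 2 * t⁻¹ ^ 2 := by ring
      _ ≤ (t * (L ^ 2 * ν) / 2) * t⁻¹ ^ 2 := this
      _ = (t * (L ^ 2 * ν) / 2) * t⁻¹ * t⁻¹ := by ring
  have hmul : t⁻¹ * ‖xplus - x‖ ≤ t⁻¹ * (‖xplus - xhat‖ + ‖xhat - x‖) :=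
    mul_le_mul_of_nonneg_left htriangle (by positivity)
  rw [mul_add] at hmul
  linarith [hmul, hstep]
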